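/- arXiv:1401.5568 — 3 statements merged into one kernel-verified Lean document; each statement's English description precedes it below -/
import Mathlib

section
/- Let n ≥ 2 and let r ≡ 2 (mod 4), r ≥ 2. The set 𝒜 = {a_0, a_1, a_1^{−1}, a_2, …, a_{n−1}}, where a_0 = s_0^2 and a_i = s_0^{r/2}·s_i for 1 ≤ i ≤ n−1, generates the group A_{r,n} of alternating colored permutations. -/
open Multiplicative

namespace ACP

/-- The action of `Sₙ` on color vectors by permuting coordinates. -/
def permAct (r n : ℕ) : Equiv.Perm (Fin n) →* MulAut (Fin n → Multiplicative (ZMod r)) where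
  toFun τ :=
    { toFun := fun z => z ∘ τ.symm
      invFun := fun z => z ∘ τ
      left_inv := fun z => by ext i; simp
      right_inv := fun z => by ext i; simp
      map_mul' := fun z w => rfl }
  map_one' := by ext z i; rfl
  map_mul' a b := by ext z i; rfl

/-- The group of colored permutations `G_{r,n} = ℤ_r ≀ Sₙ`. -/
abbrev G (r n : ℕ) : Type := (Fin n → Multiplicative (ZMod r)) ⋊[permAct r n] Equiv.Perm (Fin n)

/-- The Coxeter-like generators: `gen r n 0 = s₀` colors the digit 1 by one color,
`gen r n i = sᵢ` (for `1 ≤ i ≤ n-1`) is the adjacent transposition `(i, i+1)`. -/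
def gen (r n : ℕ) (i : ℕ) : G r n :=
  if h : 0 < i ∧ i < n then
    ⟨1, Equiv.swap ⟨i - 1, by omega⟩ ⟨i, h.2⟩⟩
  else
    ⟨fun j => if (j : ℕ) = 0 then ofAdd (1 : ZMod r) else 1, 1⟩

def zmod2ToUnits : Multiplicative (ZMod 2) →* ℤˣ where
  toFun z := (-1) ^ (toAdd z).val
  map_one' := rfl
  map_mul' := by decide

def csumHom (r n : ℕ) (hr : 2 ∣ r) :
    (Fin n → Multiplicative (ZMod r)) →* Multiplicative (ZMod 2) where
  toFun z := ofAdd (∑ i, ZMod.castHom hr (ZMod 2) (toAdd (z i)))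
  map_one' := by simp
  map_mul' z w := by
    have h : ∀ i, ZMod.castHom hr (ZMod 2) (toAdd ((z * w) i))
        = ZMod.castHom hr (ZMod 2) (toAdd (z i)) + ZMod.castHom hr (ZMod 2) (toAdd (w i)) :=
      fun i => map_add _ _ _
    simp only [h, Finset.sum_add_distrib, ofAdd_add]

/-- The sign character of `G_{r,n}` (for even `r`): sends every Coxeter-like
generator `sᵢ` to `-1`. -/
noncomputable def sgn (r n : ℕ) (hr : 2 ∣ r) : G r n →* ℤˣ :=
  SemidirectProduct.lift (zmod2ToUnits.comp (csumHom r n hr)) Equiv.Perm.sign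
    (by
      intro g
      refine MonoidHom.ext fun z => ?_
      have h1 : ∀ a x : ℤˣ, a * x * a⁻¹ = x := fun a x => by
        rw [mul_comm a x, mul_inv_cancel_right]
      simp only [MonoidHom.comp_apply, MulEquiv.coe_toMonoidHom, MulAut.conj_apply, h1]
      congr 1
      show csumHom r n hr (z ∘ g.symm) = csumHom r n hr z
      unfold csumHom
      simp only [MonoidHom.coe_mk, OneHom.coe_mk]
      congr 1
      exact Equiv.sum_comp g.symm fun j => ZMod.castHom hr (ZMod 2) (toAdd (z j)))

/-- The group of alternating colored permutations `A_{r,n}`: the kernel of the sign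
character of `G_{r,n}`. -/
noncomputable def Arn (r n : ℕ) (hr : 2 ∣ r) : Subgroup (G r n) := (sgn r n hr).ker

/-- The generators of `A_{r,n}`: `agen r n 0 = a₀ = s₀²` and
`agen r n i = aᵢ = s₀^{r/2} sᵢ` for `i ≥ 1`. -/
def agen (r n : ℕ) (i : ℕ) : G r n :=
  if i = 0 then gen r n 0 ^ 2 else gen r n 0 ^ (r / 2) * gen r n i

/-- The generating set `𝒜 = {a₀, a₁, a₁⁻¹, a₂, …, a_{n-1}}` of `A_{r,n}`. -/
def Aset (r n : ℕ) : Set (G r n) :=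
  {x | ∃ i ≤ n - 1, x = agen r n i} ∪ {(agen r n 1)⁻¹}

/-- The Coxeter-like generating set `{s₀, …, s_{n-1}}` of `G_{r,n}`. -/
def Sset (r n : ℕ) : Set (G r n) := {x | ∃ i < n, x = gen r n i}

/-- Word length of `g` with respect to a generating set `B`. -/
noncomputable def wordLength {H : Type*} [Group H] (B : Set H) (g : H) : ℕ :=
  sInf {k | ∃ w : List H, (∀ x ∈ w, x ∈ B) ∧ w.prod = g ∧ w.length = k}

/-- The element `a₁² ∈ A_{r,n}`. -/
noncomputable def a1sq (r n : ℕ) (hr : 2 ∣ r) : ↥(Arn r n hr) :=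
  ⟨agen r n 1 ^ 2, by rw [Arn, MonoidHom.mem_ker, map_pow]; exact Int.units_sq _⟩

/-- The operator `a ⊘ 2` : the residue mod `r/2` of `a/2` (`a` even) or of
`(a + r/2)/2` (`a` odd). -/
def oslash (r a : ℕ) : ℕ :=
  if a % 2 = 0 then (a / 2) % (r / 2) else ((a + r / 2) / 2) % (r / 2)

/-- `z_i(π)`, the color of digit `i+1` of `π`, as a natural number in `{0, …, r-1}`. -/
def zval (r n : ℕ) (π : G r n) (i : Fin n) : ℕ := (toAdd (π.left i)).val

/-- `csum(π) = Σ z_i(π)`. -/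
def csum (r n : ℕ) (π : G r n) : ℕ := ∑ i, zval r n π i

/-- Rank of the colored letter `b^{[c]}` (with `1 ≤ b ≤ n`, `0 ≤ c ≤ r-1`) in the
length order `n^{[r-1]} < ⋯ < 1^{[1]} < 1 < 2 < ⋯ < n`. -/
def rank (r n : ℕ) (b c : ℕ) : ℕ :=
  if c = 0 then n * (r - 1) + (b - 1) else (n - b) * (r - 1) + (r - 1 - c)

/-- Rank (in the length order) of the letter in position `i` of the window of `π`. -/
def colRank (r n : ℕ) (π : G r n) (i : Fin n) : ℕ :=
  rank r n ((π.right i : ℕ) + 1) (zval r n π (π.right i))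

/-- The inversion number of `π ∈ G_{r,n}` with respect to the length order. -/
noncomputable def inv (r n : ℕ) (π : G r n) : ℕ :=
  Nat.card {p : Fin n × Fin n // p.1 < p.2 ∧ colRank r n π p.2 < colRank r n π p.1}

/-- The ordinary inversion number of a permutation. -/
noncomputable def invPerm (n : ℕ) (τ : Equiv.Perm (Fin n)) : ℕ :=
  Nat.card {p : Fin n × Fin n // p.1 < p.2 ∧ τ p.2 < τ p.1}

/-- The covering map `p : A_{r,n} → G_{r/2,n}`, `p(z, τ) = ((zᵢ ⊘ 2)ᵢ, τ)`. -/
def pmap (r n : ℕ) (π : G r n) : G (r / 2) n :=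
  ⟨fun i => ofAdd ((oslash r (zval r n π i) : ZMod (r / 2))), π.right⟩

/-- The section `s : G_{r/2,n} → A_{r,n}`: doubles all colors (mod `r`), adding `r/2`
to the color of the digit `1` when `inv(|π|)` is odd. -/
noncomputable def smap (r n : ℕ) (π : G (r / 2) n) : G r n :=
  ⟨fun d => ofAdd
      (((2 * zval (r / 2) n π d +
        if (d : ℕ) = 0 ∧ invPerm n π.right % 2 = 1 then r / 2 else 0 : ℕ) : ZMod r)),
   π.right⟩

/-- `c(π) = Σ_{i : z_i(π) ≠ 0} (i - 1)` (digits are `1`-based). -/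
def cstat (r n : ℕ) (π : G r n) : ℕ :=
  ∑ i : Fin n, if zval r n π i ≠ 0 then (i : ℕ) else 0

/-- The number of absolute transparent inversions of `π`. -/
noncomputable def tinv (r n : ℕ) (π : G r n) : ℕ :=
  Nat.card {p : Fin n × Fin n //
    zval r n π p.1 = r / 2 ∧ p.2 < p.1 ∧ π.right⁻¹ p.1 < π.right⁻¹ p.2}

/-- The (digit-indexed) Lehmer code `l_i = #{j : j > i, τ⁻¹(i) > τ⁻¹(j)}`. -/
noncomputable def lehmer (n : ℕ) (τ : Equiv.Perm (Fin n)) (i : Fin n) : ℕ :=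
  Nat.card {j : Fin n // i < j ∧ τ⁻¹ j < τ⁻¹ i}


/-- `μ(π)`: the minimum of `β(ω) + n(ω)` over all factorizations
`ω = b₀ s₀^{i₁} b₁ ⋯ s₀^{i_{k+1}} b_{k+1}` of `π`, where each `b_u` is a word in
`s₁, …, s_{n-1}` only, `n(ω)` is the number of letters `sᵢ` with `i ≠ 0`, and
`β(ω) = Σ_u (i_u ⊘ 2)`. -/
noncomputable def mu (r n : ℕ) (π : G r n) : ℕ :=
  sInf {m | ∃ (b₀ : List ℕ) (L : List (ℕ × List ℕ)),
    (∀ x ∈ b₀, 1 ≤ x ∧ x ≤ n - 1) ∧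
    (∀ q ∈ L, ∀ x ∈ q.2, 1 ≤ x ∧ x ≤ n - 1) ∧
    π = (b₀.map (gen r n)).prod *
        (L.map (fun q => gen r n 0 ^ q.1 * (q.2.map (gen r n)).prod)).prod ∧
    m = (L.map (fun q => oslash r q.1)).sum +
        (b₀.length + (L.map (fun q => q.2.length)).sum)}

/-- The flag-inversion number on `A_{r,n}`:
`finv_A(π) = (r/2)·inv(|π|) + Σᵢ (cᵢ(π) ⊘ 2)` where `cᵢ(π) = r - zᵢ(π⁻¹) (mod r)`. -/
noncomputable def finvA (r n : ℕ) (π : G r n) : ℕ :=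
  (r / 2) * invPerm n π.right + ∑ i, oslash r ((r - zval r n π⁻¹ i) % r)

/-- The number of (colored) right-to-left minima of `π` whose color is not in `{0, r/2}`. -/
noncomputable def rtlMinA (r n : ℕ) (π : G r n) : ℕ :=
  Nat.card {i : Fin n // (∀ j : Fin n, i < j → π.right i < π.right j) ∧
    zval r n π (π.right i) ≠ 0 ∧ zval r n π (π.right i) ≠ r / 2}

/-- The defining relators of the Coxeter-like presentation of `A_{r,n}` on generators
`x₀, …, x_{n-1}`. -/
def rels (r n : ℕ) : Set (FreeGroup (Fin n)) :=
  {w | ∃ i : Fin n, (i : ℕ) = 0 ∧ w = FreeGroup.of i ^ (r / 2)} ∪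
  {w | ∃ i : Fin n, (i : ℕ) = 1 ∧ w = FreeGroup.of i ^ 4} ∪
  {w | ∃ i : Fin n, 2 ≤ (i : ℕ) ∧ w = FreeGroup.of i ^ 2} ∪
  {w | ∃ i j : Fin n, (i : ℕ) ≠ 1 ∧ (j : ℕ) ≠ 1 ∧ (i : ℕ) + 1 < (j : ℕ) ∧
    w = FreeGroup.of i * FreeGroup.of j * (FreeGroup.of i)⁻¹ * (FreeGroup.of j)⁻¹} ∪
  {w | ∃ i j : Fin n, 1 ≤ (i : ℕ) ∧ (j : ℕ) = (i : ℕ) + 1 ∧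
    w = (FreeGroup.of i * FreeGroup.of j) ^ 3} ∪
  {w | ∃ i j : Fin n, (i : ℕ) = 0 ∧ (j : ℕ) = 1 ∧
    w = (FreeGroup.of i * FreeGroup.of j) ^ (2 * r)} ∪
  {w | ∃ i j : Fin n, (i : ℕ) = 0 ∧ (j : ℕ) = 1 ∧
    w = (FreeGroup.of i * (FreeGroup.of j)⁻¹) ^ (2 * r)} ∪
  {w | ∃ i j : Fin n, (i : ℕ) = 0 ∧ (j : ℕ) = 1 ∧
    w = FreeGroup.of i * FreeGroup.of j ^ 2 * (FreeGroup.of i)⁻¹ * (FreeGroup.of j ^ 2)⁻¹} ∪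
  {w | ∃ i j : Fin n, (i : ℕ) = 1 ∧ 2 < (j : ℕ) ∧
    w = FreeGroup.of i * FreeGroup.of j * FreeGroup.of i * (FreeGroup.of j)⁻¹}

section Aux

open SemidirectProduct Equiv

variable (r n : ℕ)

/-- The color vector of `s₀`. -/
def z0 : Fin n → Multiplicative (ZMod r) :=
  fun j => if (j : ℕ) = 0 then ofAdd (1 : ZMod r) else 1

lemma gen_zero_eq : gen r n 0 = SemidirectProduct.inl (z0 r n) := rfl

lemma gen_pos_eq {i : ℕ} (h1 : 0 < i) (h2 : i < n) :
    gen r n i = SemidirectProduct.inr (Equiv.swap ⟨i - 1, by omega⟩ ⟨i, h2⟩) := by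
  rw [gen, dif_pos ⟨h1, h2⟩]; rfl

lemma gen_zero_pow (k : ℕ) : gen r n 0 ^ k = SemidirectProduct.inl (z0 r n ^ k) := by
  rw [gen_zero_eq, ← map_pow]

lemma z0_pow_apply (k : ℕ) (j : Fin n) :
    (z0 r n ^ k) j = if (j : ℕ) = 0 then ofAdd ((k : ZMod r)) else 1 := by
  simp only [Pi.pow_apply, z0]
  split
  · rw [← ofAdd_nsmul, nsmul_eq_mul, mul_one]
  · exact one_pow k

lemma gen_zero_pow_r : gen r n 0 ^ r = 1 := by
  rw [gen_zero_pow]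
  have : z0 r n ^ r = 1 := by
    funext j
    rw [z0_pow_apply, ZMod.natCast_self]
    simp
  rw [this, map_one]

lemma s0m_mul_self (hr : 2 ∣ r) :
    gen r n 0 ^ (r / 2) * gen r n 0 ^ (r / 2) = 1 := by
  rw [← pow_add, show r / 2 + r / 2 = r by omega, gen_zero_pow_r]

lemma gen_pos_mul_self {i : ℕ} (h1 : 0 < i) (h2 : i < n) :
    gen r n i * gen r n i = 1 := by
  rw [gen_pos_eq r n h1 h2, ← map_mul, Equiv.swap_mul_self, map_one]

lemma gen_pos_inv {i : ℕ} (h1 : 0 < i) (h2 : i < n) :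
    (gen r n i)⁻¹ = gen r n i :=
  inv_eq_of_mul_eq_one_right (gen_pos_mul_self r n h1 h2)

lemma s0m_inv (hr : 2 ∣ r) :
    (gen r n 0 ^ (r / 2))⁻¹ = gen r n 0 ^ (r / 2) :=
  inv_eq_of_mul_eq_one_right (s0m_mul_self r n hr)

lemma permAct_z0 {σ : Equiv.Perm (Fin n)} (hn : 0 < n) (hσ : σ ⟨0, hn⟩ = ⟨0, hn⟩) :
    permAct r n σ (z0 r n) = z0 r n := by
  funext j
  show z0 r n (σ.symm j) = z0 r n j
  unfold z0
  by_cases hj : (j : ℕ) = 0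
  · have hj' : j = ⟨0, hn⟩ := Fin.ext hj
    subst hj'
    rw [(Equiv.symm_apply_eq σ).2 hσ.symm]
  · rw [if_neg hj, if_neg]
    intro hv
    apply hj
    have h0 : σ.symm j = ⟨0, hn⟩ := Fin.ext hv
    have hj2 : j = σ ⟨0, hn⟩ := by rw [← h0, Equiv.apply_symm_apply]
    rw [hσ] at hj2
    exact congrArg Fin.val hj2

lemma commute_gen0 {i : ℕ} (h1 : 2 ≤ i) (h2 : i < n) :
    Commute (gen r n 0) (gen r n i) := by
  have hn : 0 < n := by omega
  rw [gen_zero_eq, gen_pos_eq r n (by omega) h2]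
  set σ := Equiv.swap (⟨i - 1, by omega⟩ : Fin n) ⟨i, h2⟩ with hσdef
  have hfix : σ ⟨0, hn⟩ = ⟨0, hn⟩ := by
    apply Equiv.swap_apply_of_ne_of_ne <;>
      · intro h; have := congrArg Fin.val h; simp at this; omega
  have key : permAct r n σ (z0 r n) = z0 r n := permAct_z0 r n hn hfix
  have haut := inl_aut (φ := permAct r n) σ (z0 r n)
  rw [key] at haut
  show inl (z0 r n) * inr σ = inr σ * inl (z0 r n)
  calc inl (z0 r n) * inr σ = (inr σ * inl (z0 r n) * inr σ⁻¹) * inr σ := by rw [← haut]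
    _ = inr σ * inl (z0 r n) := by
        rw [mul_assoc (inr σ * inl (z0 r n)), ← map_mul, inv_mul_cancel, map_one, mul_one]

lemma sgn_gen_zero [NeZero n] (hr : 2 ∣ r) : sgn r n hr (gen r n 0) = -1 := by
  rw [gen_zero_eq]
  unfold sgn
  rw [lift_inl]
  have h1 : csumHom r n hr (z0 r n) = ofAdd (1 : ZMod 2) := by
    simp only [csumHom, MonoidHom.coe_mk, OneHom.coe_mk]
    congr 1
    have : ∀ i : Fin n, (ZMod.castHom hr (ZMod 2)) (toAdd (z0 r n i))
        = if i = 0 then (1 : ZMod 2) else 0 := by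
      intro i
      unfold z0
      by_cases hi : (i : ℕ) = 0
      · rw [if_pos hi, if_pos (Fin.ext hi)]
        rw [toAdd_ofAdd, map_one]
      · rw [if_neg hi, if_neg (fun h => hi (congrArg Fin.val h))]
        rw [toAdd_one, map_zero]
    rw [Finset.sum_congr rfl fun i _ => this i, Fintype.sum_ite_eq' (0 : Fin n)]
  rw [MonoidHom.comp_apply, h1]
  decide

lemma sgn_gen_pos (hr : 2 ∣ r) {i : ℕ} (h1 : 0 < i) (h2 : i < n) :
    sgn r n hr (gen r n i) = -1 := by
  rw [gen_pos_eq r n h1 h2]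
  unfold sgn
  rw [lift_inr]
  apply Equiv.Perm.sign_swap
  intro h
  have := congrArg Fin.val h
  simp at this
  omega

lemma closure_Sset (hrpos : 0 < r) (hn : 1 ≤ n) :
    Subgroup.closure (Sset r n) = ⊤ := by
  obtain ⟨m, rfl⟩ : ∃ m, n = m + 1 := ⟨n - 1, by omega⟩
  have hgen0mem : gen r (m + 1) 0 ∈ Subgroup.closure (Sset r (m + 1)) :=
    Subgroup.subset_closure ⟨0, by omega, rfl⟩
  have hswap : ∀ i : Fin m,
      SemidirectProduct.inr (Equiv.swap i.castSucc i.succ) ∈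
        Subgroup.closure (Sset r (m + 1)) := by
    intro i
    have heq : gen r (m + 1) ((i : ℕ) + 1)
        = SemidirectProduct.inr (Equiv.swap i.castSucc i.succ) := by
      rw [gen_pos_eq r (m + 1) (by omega) (by omega)]
      rfl
    exact heq ▸ Subgroup.subset_closure ⟨(i : ℕ) + 1, by omega, rfl⟩
  have hinr : ∀ τ : Equiv.Perm (Fin (m + 1)),
      SemidirectProduct.inr τ ∈ Subgroup.closure (Sset r (m + 1)) := by
    intro τ
    have hτ : τ ∈ Submonoid.closure
        (Set.range fun i : Fin m => Equiv.swap i.castSucc i.succ) := by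
      rw [Equiv.Perm.mclosure_swap_castSucc_succ m]; trivial
    induction hτ using Submonoid.closure_induction with
    | mem x hx => obtain ⟨i, rfl⟩ := hx; exact hswap i
    | one => rw [map_one]; exact one_mem _
    | mul x y _ _ hx hy => rw [map_mul]; exact mul_mem hx hy
  have hinl : ∀ z : Fin (m + 1) → Multiplicative (ZMod r),
      SemidirectProduct.inl z ∈ Subgroup.closure (Sset r (m + 1)) := by
    intro z
    suffices h : z ∈ ((Subgroup.closure (Sset r (m + 1))).toSubmonoid.comap
        (SemidirectProduct.inl (φ := permAct r (m + 1)))) from h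
    rw [← Finset.univ_prod_mulSingle z]
    apply Submonoid.prod_mem
    intro i _
    rw [Submonoid.mem_comap]
    show SemidirectProduct.inl (Pi.mulSingle i (z i)) ∈ Subgroup.closure (Sset r (m + 1))
    set c := z i
    set σ := Equiv.swap (0 : Fin (m + 1)) i with hσ
    have hkey : Pi.mulSingle i c
        = permAct r (m + 1) σ (z0 r (m + 1) ^ (toAdd c).val) := by
      funext j
      show _ = (z0 r (m + 1) ^ (toAdd c).val) (σ.symm j)
      rw [Equiv.symm_swap, z0_pow_apply]
      have : NeZero r := ⟨by omega⟩
      have hc : (ofAdd (((toAdd c).val : ZMod r))) = c := by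
        rw [ZMod.natCast_val, ZMod.cast_id]
        rfl
      by_cases hj : j = i
      · subst hj
        rw [Pi.mulSingle_eq_same, if_pos, hc]
        have : σ j = 0 := by rw [hσ]; exact Equiv.swap_apply_right 0 j
        simp [this]
      · rw [Pi.mulSingle_eq_of_ne hj, if_neg]
        intro hv
        apply hj
        have h0 : σ j = 0 := Fin.ext hv
        have := congrArg σ h0
        rw [hσ] at this
        rw [Equiv.swap_apply_self, Equiv.swap_apply_left] at this
        exact this
    rw [hkey, inl_aut]
    refine mul_mem (mul_mem (hinr σ) ?_) ?_
    · rw [← gen_zero_pow]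
      exact pow_mem hgen0mem _
    · rw [map_inv]
      exact inv_mem (hinr σ)
  rw [eq_top_iff]
  intro g _
  rw [← inl_left_mul_inr_right g]
  exact mul_mem (hinl _) (hinr _)

end Aux

section Aux2

open SemidirectProduct Equiv

variable (r n : ℕ)

/-- Normal form for letters: odd powers of `s₀` or transpositions. -/
def IsLetter (x : G r n) : Prop :=
  (∃ e : ℤ, Odd e ∧ x = gen r n 0 ^ e) ∨ (∃ i, 1 ≤ i ∧ i < n ∧ x = gen r n i)

lemma even_zpow_mem (hr4 : r % 4 = 2) {k : ℤ} (hk : Even k) :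
    gen r n 0 ^ k ∈ Subgroup.closure (Aset r n) := by
  obtain ⟨t, ht⟩ := hk
  have ha0 : agen r n 0 = gen r n 0 ^ (2 : ℤ) := by
    rw [agen, if_pos rfl, zpow_two, pow_two]
  have e1 : (gen r n 0 ^ (2 : ℤ)) ^ t = gen r n 0 ^ k := by
    rw [← zpow_mul]; congr 1; omega
  rw [← e1, ← ha0]
  exact Subgroup.zpow_mem (Subgroup.closure (Aset r n))
    (Subgroup.subset_closure (Set.mem_union_left _ ⟨0, by omega, rfl⟩)) t

lemma agen_pos_mem {i : ℕ} (h1 : 1 ≤ i) (h2 : i < n) :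
    gen r n 0 ^ (r / 2) * gen r n i ∈ Subgroup.closure (Aset r n) :=
  Subgroup.subset_closure (Set.mem_union_left _ ⟨i, by omega, by rw [agen, if_neg (by omega)]⟩)

lemma agen_one_inv_mem (hn : 2 ≤ n) (hr : 2 ∣ r) :
    gen r n 1 * gen r n 0 ^ (r / 2) ∈ Subgroup.closure (Aset r n) := by
  have h : (agen r n 1)⁻¹ = gen r n 1 * gen r n 0 ^ (r / 2) := by
    rw [agen, if_neg one_ne_zero, mul_inv_rev, gen_pos_inv r n one_pos (by omega),
      s0m_inv r n hr]
  exact h ▸ Subgroup.subset_closure (Set.mem_union_right _ rfl)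

lemma pair_mem (hn : 2 ≤ n) (hr4 : r % 4 = 2) (x y : G r n)
    (hx : IsLetter r n x) (hy : IsLetter r n y) :
    x * y ∈ Subgroup.closure (Aset r n) := by
  have hr2 : 2 ∣ r := by omega
  have hmOdd : Odd ((r / 2 : ℕ) : ℤ) := by rw [Int.odd_iff]; omega
  rcases hx with ⟨e, he, rfl⟩ | ⟨i, hi1, hi2, rfl⟩ <;>
    rcases hy with ⟨f, hf, rfl⟩ | ⟨j, hj1, hj2, rfl⟩
  · rw [← zpow_add]
    exact even_zpow_mem r n hr4 (Odd.add_odd he hf)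
  · have heq : gen r n 0 ^ e * gen r n j
        = gen r n 0 ^ (e - ((r / 2 : ℕ) : ℤ)) * (gen r n 0 ^ (r / 2) * gen r n j) := by
      rw [← mul_assoc, ← zpow_natCast (gen r n 0) (r / 2), ← zpow_add, sub_add_cancel]
    rw [heq]
    exact mul_mem (even_zpow_mem r n hr4 (Odd.sub_odd he hmOdd))
      (agen_pos_mem r n hj1 hj2)
  · by_cases hi : 2 ≤ i
    · have c : Commute (gen r n 0 ^ f) (gen r n i) :=
        (commute_gen0 r n hi hi2).zpow_left f
      rw [← c.eq]
      have heq : gen r n 0 ^ f * gen r n i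
          = gen r n 0 ^ (f - ((r / 2 : ℕ) : ℤ)) * (gen r n 0 ^ (r / 2) * gen r n i) := by
        rw [← mul_assoc, ← zpow_natCast (gen r n 0) (r / 2), ← zpow_add, sub_add_cancel]
      rw [heq]
      exact mul_mem (even_zpow_mem r n hr4 (Odd.sub_odd hf hmOdd))
        (agen_pos_mem r n hi1 hi2)
    · have hi' : i = 1 := by omega
      subst hi'
      have heq : gen r n 1 * gen r n 0 ^ f
          = (gen r n 1 * gen r n 0 ^ (r / 2)) * gen r n 0 ^ (f - ((r / 2 : ℕ) : ℤ)) := by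
        have hsplit : ((r / 2 : ℕ) : ℤ) + (f - ((r / 2 : ℕ) : ℤ)) = f := by ring
        rw [mul_assoc, ← zpow_natCast (gen r n 0) (r / 2), ← zpow_add, hsplit]
      rw [heq]
      exact mul_mem (agen_one_inv_mem r n hn hr2)
        (even_zpow_mem r n hr4 (Odd.sub_odd hf hmOdd))
  · by_cases hi : 2 ≤ i
    · have c : gen r n i * gen r n 0 ^ (r / 2) = gen r n 0 ^ (r / 2) * gen r n i :=
        ((commute_gen0 r n hi hi2).pow_left (r / 2)).symm.eq
      have heq : (gen r n 0 ^ (r / 2) * gen r n i) * (gen r n 0 ^ (r / 2) * gen r n j)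
          = gen r n i * gen r n j := by
        calc (gen r n 0 ^ (r / 2) * gen r n i) * (gen r n 0 ^ (r / 2) * gen r n j)
            = gen r n 0 ^ (r / 2) * (gen r n i * gen r n 0 ^ (r / 2)) * gen r n j := by
              simp only [mul_assoc]
          _ = gen r n 0 ^ (r / 2) * (gen r n 0 ^ (r / 2) * gen r n i) * gen r n j := by
              rw [c]
          _ = (gen r n 0 ^ (r / 2) * gen r n 0 ^ (r / 2)) * (gen r n i * gen r n j) := by
              simp only [mul_assoc]
          _ = gen r n i * gen r n j := by rw [s0m_mul_self r n hr2, one_mul]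
      rw [← heq]
      exact mul_mem (agen_pos_mem r n hi1 hi2) (agen_pos_mem r n hj1 hj2)
    · have hi' : i = 1 := by omega
      subst hi'
      have heq : (gen r n 1 * gen r n 0 ^ (r / 2)) * (gen r n 0 ^ (r / 2) * gen r n j)
          = gen r n 1 * gen r n j := by
        calc (gen r n 1 * gen r n 0 ^ (r / 2)) * (gen r n 0 ^ (r / 2) * gen r n j)
            = gen r n 1 * ((gen r n 0 ^ (r / 2) * gen r n 0 ^ (r / 2)) * gen r n j) := by
              simp only [mul_assoc]
          _ = gen r n 1 * gen r n j := by rw [s0m_mul_self r n hr2, one_mul]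
      rw [← heq]
      exact mul_mem (agen_one_inv_mem r n hn hr2) (agen_pos_mem r n hj1 hj2)

lemma even_prod_mem (hn : 2 ≤ n) (hr4 : r % 4 = 2) :
    ∀ (k : ℕ) (l : List (G r n)), l.length = 2 * k →
      (∀ x ∈ l, IsLetter r n x) → l.prod ∈ Subgroup.closure (Aset r n) := by
  intro k
  induction k with
  | zero =>
    intro l hl _
    rw [Nat.mul_zero, List.length_eq_zero_iff] at hl
    subst hl
    exact one_mem _
  | succ k ih =>
    intro l hl hP
    match l with
    | x :: y :: t =>
      have : (x :: y :: t).prod = (x * y) * t.prod := by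
        rw [List.prod_cons, List.prod_cons, mul_assoc]
      rw [this]
      refine mul_mem (pair_mem r n hn hr4 x y (hP x (by simp)) (hP y (by simp))) ?_
      exact ih t (by simp at hl ⊢; omega) (fun z hz => hP z (by simp [hz]))

lemma neg_one_zpow_odd {e : ℤ} (he : Odd e) : (-1 : ℤˣ) ^ e = -1 := by
  obtain ⟨t, rfl⟩ := he
  rw [zpow_add, zpow_one, zpow_mul, show ((2 : ℤ) = ((2 : ℕ) : ℤ)) from rfl,
    zpow_natCast]
  norm_num

lemma sgn_letter [NeZero n] (hr : 2 ∣ r) (x : G r n) (hx : IsLetter r n x) :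
    sgn r n hr x = -1 := by
  rcases hx with ⟨e, he, rfl⟩ | ⟨i, hi1, hi2, rfl⟩
  · rw [map_zpow, sgn_gen_zero r n hr]
    exact neg_one_zpow_odd he
  · exact sgn_gen_pos r n hr hi1 hi2

lemma sgn_list_prod [NeZero n] (hr : 2 ∣ r) (l : List (G r n))
    (hl : ∀ x ∈ l, IsLetter r n x) :
    sgn r n hr l.prod = (-1) ^ l.length := by
  induction l with
  | nil => rw [List.prod_nil, map_one, List.length_nil, pow_zero]
  | cons x t ih =>
    rw [List.prod_cons, map_mul, sgn_letter r n hr x (hl x (by simp)),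
      ih (fun z hz => hl z (by simp [hz])), List.length_cons, pow_succ]
    exact mul_comm _ _

end Aux2

end ACP

/-- for `n ≥ 2` and `r ≡ 2 (mod 4)`, the set
`𝒜 = {a₀, a₁, a₁⁻¹, a₂, …, a_{n-1}}` generates `A_{r,n}`. -/
theorem Aset_generates (r n : ℕ) (hn : 2 ≤ n) (hr : r % 4 = 2) :
    Subgroup.closure (ACP.Aset r n) = ACP.Arn r n (by omega) := by
  have hr2 : 2 ∣ r := by omega
  haveI : NeZero n := ⟨by omega⟩
  have hagen : ∀ h2 : 2 ∣ r, ∀ i ≤ n - 1, ACP.sgn r n h2 (ACP.agen r n i) = 1 := by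
    intro h2 i hi
    by_cases h0 : i = 0
    · subst h0
      rw [ACP.agen, if_pos rfl, map_pow, ACP.sgn_gen_zero r n h2]
      decide
    · rw [ACP.agen, if_neg h0, map_mul, map_pow, ACP.sgn_gen_zero r n h2,
        ACP.sgn_gen_pos r n h2 (by omega) (by omega)]
      have hodd : Odd (r / 2) := by rw [Nat.odd_iff]; omega
      rw [hodd.neg_one_pow]
      decide
  apply le_antisymm
  · rw [Subgroup.closure_le]
    intro x hx
    show x ∈ ACP.Arn r n _
    rw [ACP.Arn, MonoidHom.mem_ker]
    rcases hx with ⟨i, hi, rfl⟩ | h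
    · exact hagen _ i hi
    · rw [Set.mem_singleton_iff] at h
      subst h
      rw [map_inv, hagen _ 1 (by omega), inv_one]
  · intro g hg
    rw [ACP.Arn, MonoidHom.mem_ker] at hg
    have hgsub : g ∈ Submonoid.closure (ACP.Sset r n ∪ (ACP.Sset r n)⁻¹) := by
      rw [← Subgroup.closure_toSubmonoid]
      show g ∈ Subgroup.closure (ACP.Sset r n)
      rw [ACP.closure_Sset r n (by omega) (by omega)]
      trivial
    obtain ⟨l, hl, hprod⟩ := Submonoid.exists_list_of_mem_closure hgsub
    have hP : ∀ x ∈ l, ACP.IsLetter r n x := by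
      intro x hx
      rcases hl x hx with h | h
      · obtain ⟨i, hi, rfl⟩ := h
        by_cases h0 : i = 0
        · subst h0
          exact Or.inl ⟨1, odd_one, (zpow_one _).symm⟩
        · exact Or.inr ⟨i, by omega, hi, rfl⟩
      · rw [Set.mem_inv] at h
        obtain ⟨i, hi, hxi⟩ := h
        have hxeq : x = (ACP.gen r n i)⁻¹ := by rw [← hxi, inv_inv]
        by_cases h0 : i = 0
        · subst h0
          exact Or.inl ⟨-1, ⟨-1, by ring⟩, by rw [hxeq, zpow_neg_one]⟩
        · exact Or.inr ⟨i, by omega, hi,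
            by rw [hxeq, ACP.gen_pos_inv r n (by omega) hi]⟩
    have hlen : Even l.length := by
      have hsl := ACP.sgn_list_prod r n hr2 l hP
      rw [hprod] at hsl
      have hsl' : ((-1 : ℤˣ)) ^ l.length = 1 := by rw [← hsl]; exact hg
      by_contra hodd
      rw [Nat.not_even_iff_odd] at hodd
      rw [hodd.neg_one_pow] at hsl'
      exact absurd hsl' (by decide)
    obtain ⟨k, hk⟩ := hlen
    rw [← hprod]
    exact ACP.even_prod_mem r n hn hr k l (by omega) hP
end

section
/- Let n ≥ 1, let r ≥ 2 be even, and let π ∈ G_{r,n}. Then π ∈ A_{r,n} if and only if csum(π) + inv(|π|) ≡ 0 (mod 2), where inv(|π|) is the ordinary inversion number of the underlying permutation |π| ∈ S_n. -/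
open Multiplicative

section Aux

open Equiv Equiv.Perm Finset

theorem ACP.sign_eq_signAux {n : ℕ} (f : Perm (Fin n)) : Perm.sign f = Perm.signAux f := by
  refine Equiv.Perm.swap_induction_on f (by simp [Perm.signAux_one]) ?_
  intro f x y hxy ih
  rw [map_mul, Perm.signAux_mul, ih, Perm.sign_swap hxy, Perm.signAux_swap hxy]

theorem ACP.signAux_eq_pow {n : ℕ} (f : Perm (Fin n)) :
    Perm.signAux f = (-1 : ℤˣ) ^ ACP.invPerm n f := by
  unfold Perm.signAux
  rw [Finset.prod_ite, Finset.prod_const, Finset.prod_const, one_pow, mul_one]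
  congr 1
  rw [ACP.invPerm, Nat.card_eq_fintype_card, Fintype.card_subtype]
  apply Finset.card_bij (fun a _ => (⟨a.2, a.1⟩ : Fin n × Fin n))
  · rintro ⟨a, b⟩ ha
    simp only [mem_filter, Perm.mem_finPairsLT] at ha ⊢
    refine ⟨Finset.mem_univ _, ha.1, lt_of_le_of_ne ha.2 ?_⟩
    exact fun h => (ne_of_gt ha.1) (f.injective h)
  · rintro ⟨a, b⟩ _ ⟨c, d⟩ _ h
    simp only [Prod.mk.injEq] at h
    simp [h.1, h.2]
  · rintro ⟨a, b⟩ hb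
    simp only [mem_filter, mem_univ, true_and] at hb
    exact ⟨⟨b, a⟩, by simp [Perm.mem_finPairsLT, hb.1, hb.2.le], rfl⟩

theorem ACP.sign_eq_pow {n : ℕ} (f : Perm (Fin n)) :
    Perm.sign f = (-1 : ℤˣ) ^ ACP.invPerm n f := by
  rw [ACP.sign_eq_signAux, ACP.signAux_eq_pow]

theorem ACP.neg_one_pow_mod_two (m : ℕ) : ((-1 : ℤˣ)) ^ (m % 2) = (-1 : ℤˣ) ^ m := by
  conv_rhs => rw [← Nat.mod_add_div m 2]
  rw [pow_add, pow_mul, neg_one_sq, one_pow, mul_one]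

end Aux

/-- `π ∈ A_{r,n}` iff `csum(π) + inv(|π|) ≡ 0 (mod 2)`. -/
theorem mem_Arn_iff (r n : ℕ) (hn : 1 ≤ n) (hr : 2 ≤ r) (hre : 2 ∣ r) (π : ACP.G r n) :
    π ∈ ACP.Arn r n hre ↔ (ACP.csum r n π + ACP.invPerm n π.right) % 2 = 0 := by
  haveI : NeZero r := ⟨by omega⟩
  have hdecomp : π = SemidirectProduct.inl π.left * SemidirectProduct.inr π.right :=
    (SemidirectProduct.inl_left_mul_inr_right π).symm
  have hsgn : ACP.sgn r n hre π =
      ACP.zmod2ToUnits (ACP.csumHom r n hre π.left) * Equiv.Perm.sign π.right := by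
    conv_lhs => rw [hdecomp]
    rw [map_mul, ACP.sgn, SemidirectProduct.lift_inl, SemidirectProduct.lift_inr]
    rfl
  have hcs : ACP.zmod2ToUnits (ACP.csumHom r n hre π.left)
      = (-1 : ℤˣ) ^ ACP.csum r n π := by
    have h1 : (∑ i, ZMod.castHom hre (ZMod 2) (toAdd (π.left i)))
        = ((ACP.csum r n π : ℕ) : ZMod 2) := by
      rw [ACP.csum, Nat.cast_sum]
      refine Finset.sum_congr rfl fun i _ => ?_
      rw [ZMod.castHom_apply, ACP.zval, ZMod.natCast_val]
    show (-1 : ℤˣ) ^ (toAdd (ofAdd (∑ i, ZMod.castHom hre (ZMod 2) (toAdd (π.left i))))).val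
        = (-1 : ℤˣ) ^ ACP.csum r n π
    rw [toAdd_ofAdd, h1, ZMod.val_natCast, ACP.neg_one_pow_mod_two]
  have key : ACP.sgn r n hre π = (-1 : ℤˣ) ^ (ACP.csum r n π + ACP.invPerm n π.right) := by
    rw [hsgn, hcs, ACP.sign_eq_pow, pow_add]
  rw [ACP.Arn, MonoidHom.mem_ker, key, ← Nat.even_iff]
  exact neg_one_pow_eq_one_iff_even (by decide)
end

section
/- Let n ≥ 2 and let r ≡ 2 (mod 4), r ≥ 2. The kernel of the epimorphism p : A_{r,n} → G_{r/2,n} equals the normal closure in A_{r,n} of the element a_1^2 = (s_0^{r/2}s_1)^2; consequently, G_{r/2,n} is isomorphic to the quotient of A_{r,n} by the normal closure of a_1^2. -/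
open Multiplicative

namespace ACP

theorem two_dvd_of_mod_four (r : ℕ) (hr : r % 4 = 2) : 2 ∣ r := by omega

end ACP

namespace ACPAux
open ACP SemidirectProduct

variable {r n : ℕ}

lemma natCast_mod_of_dvd {m r : ℕ} (h : m ∣ r) (x : ℕ) : ((x % r : ℕ) : ZMod m) = x := by
  conv_rhs => rw [← Nat.div_add_mod x r]
  push_cast
  rw [(ZMod.natCast_eq_zero_iff r m).mpr h]
  ring

lemma oslash_two_mul (hr : r % 4 = 2) (a : ℕ) :
    ((2 * ACP.oslash r a : ℕ) : ZMod (r/2)) = a := by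
  have hmod : ∀ x : ℕ, ((2 * (x % (r/2)) : ℕ) : ZMod (r/2)) = ((2*x : ℕ) : ZMod (r/2)) := by
    intro x; rw [Nat.cast_mul, Nat.cast_mul, natCast_mod_of_dvd dvd_rfl]
  unfold ACP.oslash
  rcases Nat.even_or_odd a with he | ho
  · rw [if_pos (Nat.even_iff.mp he), hmod, show 2*(a/2) = a by
      have := Nat.even_iff.mp he; omega]
  · have h1 : a % 2 = 1 := Nat.odd_iff.mp ho
    rw [if_neg (by omega : ¬ a % 2 = 0), hmod,
      show 2*((a + r/2)/2) = a + r/2 by omega]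
    rw [Nat.cast_add, ZMod.natCast_self, add_zero]

lemma two_unit (hr : r % 4 = 2) : IsUnit (2 : ZMod (r/2)) := by
  haveI : NeZero (r/2) := ⟨by omega⟩
  have := (ZMod.isUnit_iff_coprime 2 (r/2)).mpr
    (Nat.coprime_two_left.mpr (Nat.odd_iff.mpr (by omega)))
  simpa using this

lemma two_mul_cancel (hr : r % 4 = 2) {x y : ZMod (r/2)}
    (h : (2 : ZMod (r/2)) * x = 2 * y) : x = y :=
  (two_unit hr).mul_left_cancel h

lemma two_mul_oslash (hr : r % 4 = 2) (a : ℕ) :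
    (2 : ZMod (r/2)) * ((ACP.oslash r a : ℕ) : ZMod (r/2)) = a := by
  have h := oslash_two_mul hr a
  rw [Nat.cast_mul] at h
  simpa using h

lemma half_dvd (hr : r % 4 = 2) : r/2 ∣ r := ⟨2, by omega⟩

lemma oslash_cast_add (hr : r % 4 = 2) (x y : ZMod r) :
    ((ACP.oslash r (x+y).val : ℕ) : ZMod (r/2)) =
      ((ACP.oslash r x.val : ℕ) : ZMod (r/2)) + ((ACP.oslash r y.val : ℕ) : ZMod (r/2)) := by
  haveI : NeZero r := ⟨by omega⟩
  apply two_mul_cancel hr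
  rw [mul_add, two_mul_oslash hr, two_mul_oslash hr, two_mul_oslash hr,
    ZMod.val_add, natCast_mod_of_dvd (half_dvd hr), Nat.cast_add]

/-- `⊘2` as a monoid hom on colors. -/
def phi (r : ℕ) (hr : r % 4 = 2) : Multiplicative (ZMod r) →* Multiplicative (ZMod (r/2)) where
  toFun x := ofAdd ((ACP.oslash r (toAdd x).val : ℕ) : ZMod (r/2))
  map_one' := by
    haveI : NeZero r := ⟨by omega⟩
    show ofAdd _ = 1
    rw [show toAdd (1 : Multiplicative (ZMod r)) = 0 from rfl, ZMod.val_zero]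
    norm_num [ACP.oslash]
  map_mul' x y := by
    show ofAdd _ = ofAdd _ * ofAdd _
    rw [← ofAdd_add, ← oslash_cast_add hr]
    rfl

/-- `⊘2` applied coordinatewise. -/
def PL (r n : ℕ) (hr : r % 4 = 2) :
    (Fin n → Multiplicative (ZMod r)) →* (Fin n → Multiplicative (ZMod (r/2))) where
  toFun z := fun i => phi r hr (z i)
  map_one' := by ext i; simp
  map_mul' z w := by ext i; simp

/-- `p` as a monoid hom on all of `G r n`. -/
def Pfull (r n : ℕ) (hr : r % 4 = 2) : G r n →* G (r/2) n :=
  SemidirectProduct.map (PL r n hr) (MonoidHom.id _) (fun g => rfl)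

lemma Pfull_eq_pmap (hr : r % 4 = 2) (π : G r n) : Pfull r n hr π = ACP.pmap r n π := rfl


section Elements
variable (r n : ℕ)

/-- The color vector of `s₀`. -/
def delta : Fin n → Multiplicative (ZMod r) :=
  fun j => if (j : ℕ) = 0 then ofAdd (1 : ZMod r) else 1

lemma gen_zero : ACP.gen r n 0 = inl (delta r n) := by
  unfold ACP.gen
  rw [dif_neg (by omega)]
  rfl

lemma delta_pow (k : ℕ) :
    delta r n ^ k = fun j : Fin n => if (j : ℕ) = 0 then ofAdd ((k : ZMod r)) else 1 := by
  funext j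
  show (delta r n j) ^ k = _
  unfold delta
  split_ifs
  · rw [← ofAdd_nsmul, nsmul_eq_mul, mul_one]
  · exact one_pow k

variable (hn : 2 ≤ n)

/-- `|s₁| = (1 2)`. -/
def sigma : Equiv.Perm (Fin n) := Equiv.swap ⟨0, by omega⟩ ⟨1, by omega⟩

lemma gen_one : ACP.gen r n 1 = inr (sigma n hn) := by
  unfold ACP.gen
  rw [dif_pos ⟨Nat.one_pos, by omega⟩]
  show (⟨1, _⟩ : ACP.G r n) = ⟨1, _⟩
  rfl

lemma agen_one : ACP.agen r n 1 = inl (delta r n ^ (r/2)) * inr (sigma n hn) := by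
  unfold ACP.agen
  rw [if_neg one_ne_zero, gen_zero, gen_one r n hn, map_pow]

/-- The element of `G r n` with trivial permutation and colors `(r/2)·v`. -/
def Evec (v : Fin n → ZMod 2) : ACP.G r n :=
  inl (fun i => ofAdd (((r/2 * (v i).val : ℕ)) : ZMod r))

lemma half_mul_mod_two (hr : r % 4 = 2) (x : ℕ) :
    ((r/2 * (x % 2) : ℕ) : ZMod r) = ((r/2 * x : ℕ) : ZMod r) := by
  have h2 : r/2*2 = r := by omega
  have h : r/2 * x = r/2 * (x % 2) + r * (x / 2) := by
    calc r/2 * x = r/2 * (x % 2 + 2*(x/2)) := by rw [Nat.mod_add_div x 2]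
      _ = r/2*(x % 2) + r/2*2*(x/2) := by ring
      _ = r/2*(x % 2) + r*(x/2) := by rw [h2]
  rw [h, Nat.cast_add, Nat.cast_mul r, ZMod.natCast_self, zero_mul, add_zero]

lemma Evec_add (hr : r % 4 = 2) (v w : Fin n → ZMod 2) :
    Evec r n (v + w) = Evec r n v * Evec r n w := by
  unfold Evec
  rw [← map_mul]
  congr 1
  funext i
  show (ofAdd _ : Multiplicative (ZMod r)) = (ofAdd _ * ofAdd _ : Multiplicative (ZMod r))
  rw [← ofAdd_add, ← Nat.cast_add, ← Nat.mul_add]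
  show ofAdd ((_ : ℕ) : ZMod r) = _
  rw [Pi.add_apply, ZMod.val_add, half_mul_mod_two r hr]

lemma Evec_zero : Evec r n 0 = 1 := by
  unfold Evec
  convert map_one (inl : _ →* ACP.G r n) using 2
  funext i
  simp

lemma conj_inl (c : ACP.G r n) (z : Fin n → Multiplicative (ZMod r)) :
    c * inl z * c⁻¹ = inl ((ACP.permAct r n c.right) z) := by
  refine SemidirectProduct.ext ?_ ?_
  · simp only [mul_left, mul_right, inv_left, inv_right, left_inl, right_inl, mul_one]
    rw [← MulAut.mul_apply, ← map_mul, mul_inv_cancel, map_one, MulAut.one_apply,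
      mul_comm c.left, mul_inv_cancel_right]
  · simp

end Elements


section Sgn
variable (r n : ℕ) (h2 : 2 ∣ r)

lemma sgn_inl (z : Fin n → Multiplicative (ZMod r)) :
    ACP.sgn r n h2 (inl z) = ACP.zmod2ToUnits (ACP.csumHom r n h2 z) :=
  SemidirectProduct.lift_inl _ _ _ z

lemma sgn_inr (τ : Equiv.Perm (Fin n)) :
    ACP.sgn r n h2 (inr τ) = Equiv.Perm.sign τ :=
  SemidirectProduct.lift_inr _ _ _ τ

lemma half_cast_two (hr : r % 4 = 2) : ((r/2 : ℕ) : ZMod 2) = 1 := by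
  have h := natCast_mod_of_dvd (dvd_refl 2) (r/2)
  rw [show r/2 % 2 = 1 by omega] at h
  simpa using h.symm

lemma csum_Evec (hr : r % 4 = 2) (v : Fin n → ZMod 2) :
    ACP.csumHom r n h2 (fun i => ofAdd (((r/2 * (v i).val : ℕ)) : ZMod r)) =
      ofAdd (∑ i, v i) := by
  unfold ACP.csumHom
  simp only [MonoidHom.coe_mk, OneHom.coe_mk, toAdd_ofAdd]
  congr 1
  refine Finset.sum_congr rfl fun i _ => ?_
  rw [map_natCast, Nat.cast_mul, half_cast_two r hr, one_mul, ZMod.natCast_val, ZMod.cast_id]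

lemma Evec_mem (hr : r % 4 = 2) (v : Fin n → ZMod 2) (hv : ∑ i, v i = 0) :
    Evec r n v ∈ ACP.Arn r n h2 := by
  rw [ACP.Arn, MonoidHom.mem_ker]
  unfold Evec
  rw [sgn_inl, csum_Evec r n h2 hr, hv]
  rfl

lemma csum_delta_pow (hr : r % 4 = 2) (hn : 2 ≤ n) :
    ACP.csumHom r n h2 (delta r n ^ (r/2)) = ofAdd 1 := by
  unfold ACP.csumHom
  simp only [MonoidHom.coe_mk, OneHom.coe_mk, delta_pow]
  congr 1
  have step : ∀ i : Fin n,
      (ZMod.castHom h2 (ZMod 2)) (toAdd (if (i:ℕ) = 0 then ofAdd ((r/2 : ℕ) : ZMod r) else 1))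
      = if i = (⟨0, by omega⟩ : Fin n) then 1 else 0 := by
    intro i
    rcases eq_or_ne (i : ℕ) 0 with h | h
    · rw [if_pos h, if_pos (by exact Fin.ext h), toAdd_ofAdd, map_natCast, half_cast_two r hr]
    · rw [if_neg h, if_neg (by simp [Fin.ext_iff, h]), toAdd_one, map_zero]
  rw [Finset.sum_congr rfl (fun i _ => step i), Finset.sum_ite_eq' Finset.univ _ (fun _ => (1 : ZMod 2))]
  simp

lemma zmod2ToUnits_one' : ACP.zmod2ToUnits (ofAdd (1 : ZMod 2)) = -1 := by decide

lemma exists_conj (hr : r % 4 = 2) (hn : 2 ≤ n) (τ : Equiv.Perm (Fin n)) :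
    ∃ c : ACP.G r n, c ∈ ACP.Arn r n h2 ∧ c.right = τ := by
  rcases Int.units_eq_one_or (Equiv.Perm.sign τ) with hs | hs
  · exact ⟨inr τ, by rw [ACP.Arn, MonoidHom.mem_ker, sgn_inr, hs], by simp⟩
  · refine ⟨inl (delta r n ^ (r/2)) * inr τ, ?_,
      by rw [mul_right, right_inl, right_inr, one_mul]⟩
    rw [ACP.Arn, MonoidHom.mem_ker, map_mul, sgn_inr, sgn_inl,
      csum_delta_pow r n h2 hr hn, zmod2ToUnits_one', hs]
    decide

end Sgn


section Closure
variable (r n : ℕ) (h2 : 2 ∣ r)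

lemma conj_Evec (c : ACP.G r n) (v : Fin n → ZMod 2) :
    c * Evec r n v * c⁻¹ = Evec r n (v ∘ c.right.symm) := by
  unfold Evec
  rw [conj_inl]
  rfl

lemma a1sq_val (hr : r % 4 = 2) (hn : 2 ≤ n) :
    (ACP.a1sq r n h2 : ACP.G r n) =
      Evec r n (Pi.single (⟨0, by omega⟩ : Fin n) 1 + Pi.single (⟨1, by omega⟩ : Fin n) 1) := by
  show ACP.agen r n 1 ^ 2 = _
  rw [agen_one r n hn]
  set D := delta r n ^ (r/2) with hD
  set σ := sigma n hn with hσ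
  have hcomm : inr σ * inl D = (inl ((ACP.permAct r n σ) D) : ACP.G r n) * inr σ := by
    rw [inl_aut, map_inv, inv_mul_cancel_right]
  have hstep : (inl D * inr σ : ACP.G r n) ^ 2 = inl (D * (ACP.permAct r n σ) D) := by
    calc (inl D * inr σ : ACP.G r n) ^ 2
        = inl D * (inr σ * inl D) * inr σ := by rw [pow_two]; group
      _ = inl (D * (ACP.permAct r n σ) D) * (inr σ * inr σ) := by
          rw [hcomm, map_mul]; group
      _ = inl (D * (ACP.permAct r n σ) D) := by
          rw [← map_mul, (show σ * σ = 1 from Equiv.swap_mul_self _ _), map_one, mul_one]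
  rw [hstep]
  unfold Evec
  congr 1
  funext t
  show D t * (ACP.permAct r n σ) D t = _
  have happ : (ACP.permAct r n σ) D t = D (σ.symm t) := rfl
  have hsymm : σ.symm = σ := by rw [hσ]; exact Equiv.symm_swap _ _
  rw [happ, hsymm, hD, delta_pow, hσ]
  unfold sigma
  rcases eq_or_ne t (⟨0, by omega⟩ : Fin n) with h0 | h0
  · subst h0
    simp [Pi.single_apply, Fin.ext_iff, show ((1:ZMod 2)).val = 1 from rfl]
  · rcases eq_or_ne t (⟨1, by omega⟩ : Fin n) with h1 | h1
    · subst h1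
      simp [Pi.single_apply, Fin.ext_iff, show ((1:ZMod 2)).val = 1 from rfl]
    · rw [Equiv.swap_apply_of_ne_of_ne h0 h1]
      have h0' : ¬ (t : ℕ) = 0 := fun hc => h0 (Fin.ext hc)
      simp [Pi.single_apply, h0, h1, h0']

end Closure


section Closure2
variable (r n : ℕ) (h2 : 2 ∣ r)

lemma sum_single_pair (i j : Fin n) (hij : i ≠ j) :
    ∑ t, (Pi.single i 1 + Pi.single j 1 : Fin n → ZMod 2) t = 0 := by
  simp only [Pi.add_apply]
  rw [Finset.sum_add_distrib, Finset.sum_pi_single', Finset.sum_pi_single']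
  simp only [Finset.mem_univ, if_true]
  decide

lemma pair_mem (hr : r % 4 = 2) (hn : 2 ≤ n) (i j : Fin n) (hij : i ≠ j)
    (hm : Evec r n (Pi.single i 1 + Pi.single j 1) ∈ ACP.Arn r n h2) :
    (⟨Evec r n (Pi.single i 1 + Pi.single j 1), hm⟩ : ↥(ACP.Arn r n h2)) ∈
      Subgroup.normalClosure {ACP.a1sq r n h2} := by
  have hne01 : (⟨0, by omega⟩ : Fin n) ≠ (⟨1, by omega⟩ : Fin n) :=
    Fin.ne_of_val_ne (by simp)
  set i0 : Fin n := ⟨0, by omega⟩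
  set i1 : Fin n := ⟨1, by omega⟩
  set s1 := Equiv.swap i0 i with hs1
  have hs10 : s1 i0 = i := Equiv.swap_apply_left _ _
  set σ := Equiv.swap (s1 i1) j * s1 with hσdef
  have hσ0 : σ i0 = i := by
    show Equiv.swap (s1 i1) j (s1 i0) = i
    rw [hs10]
    apply Equiv.swap_apply_of_ne_of_ne
    · intro hc
      exact hne01 (s1.injective (hs10.trans hc))
    · exact hij
  have hσ1 : σ i1 = j := by
    show Equiv.swap (s1 i1) j (s1 i1) = j
    exact Equiv.swap_apply_left _ _
  obtain ⟨c, hc, hcr⟩ := exists_conj r n h2 hr hn σ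
  have key : (⟨c, hc⟩ : ↥(ACP.Arn r n h2)) * ACP.a1sq r n h2 * (⟨c, hc⟩ : ↥(ACP.Arn r n h2))⁻¹ =
      ⟨Evec r n (Pi.single i 1 + Pi.single j 1), hm⟩ := by
    apply Subtype.ext
    show c * (ACP.a1sq r n h2 : ACP.G r n) * c⁻¹ = _
    rw [a1sq_val r n h2 hr hn, conj_Evec, hcr]
    congr 1
    funext t
    show (Pi.single i0 1 + Pi.single i1 1 : Fin n → ZMod 2) (σ.symm t)
        = (Pi.single i 1 + Pi.single j 1 : Fin n → ZMod 2) t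
    simp only [Pi.add_apply, Pi.single_apply]
    have e0 : σ.symm t = i0 ↔ t = i := by rw [Equiv.symm_apply_eq, hσ0]
    have e1 : σ.symm t = i1 ↔ t = j := by rw [Equiv.symm_apply_eq, hσ1]
    rw [if_congr e0 rfl rfl, if_congr e1 rfl rfl]
  rw [← key]
  exact (Subgroup.normalClosure_normal).conj_mem _
    (Subgroup.subset_normalClosure (Set.mem_singleton _)) _

lemma evec_mem_closure (hr : r % 4 = 2) (hn : 2 ≤ n) :
    ∀ k (v : Fin n → ZMod 2), (Finset.univ.filter (fun i => v i ≠ 0)).card = k →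
      (∑ i, v i = 0) → ∀ hm : Evec r n v ∈ ACP.Arn r n h2,
      (⟨Evec r n v, hm⟩ : ↥(ACP.Arn r n h2)) ∈ Subgroup.normalClosure {ACP.a1sq r n h2} := by
  intro k
  induction k using Nat.strong_induction_on with
  | _ k IH =>
  intro v hcard hsum hm
  have hone : ∀ a : ZMod 2, a ≠ 0 → a = 1 := by decide
  rcases Nat.eq_zero_or_pos k with hk0 | hkpos
  · have hv : v = 0 := by
      funext t
      show v t = 0
      by_contra hne
      have ht : t ∈ Finset.univ.filter (fun i => v i ≠ 0) := by
        simp only [Finset.mem_filter, Finset.mem_univ, true_and]; exact hne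
      have hempty : Finset.univ.filter (fun i => v i ≠ 0) = ∅ :=
        Finset.card_eq_zero.mp (hcard.trans hk0)
      rw [hempty] at ht
      exact absurd ht (Finset.notMem_empty t)
    have h1 : (⟨Evec r n v, hm⟩ : ↥(ACP.Arn r n h2)) = 1 := by
      apply Subtype.ext
      show Evec r n v = 1
      rw [hv, Evec_zero]
    rw [h1]; exact one_mem _
  · have hcast : ((k : ℕ) : ZMod 2) = 0 := by
      have e1 : ∑ i ∈ Finset.univ.filter (fun i => v i ≠ 0), v i = ∑ i, v i := by
        rw [Finset.sum_filter_ne_zero]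
      have e2 : ∑ i ∈ Finset.univ.filter (fun i => v i ≠ 0), v i
          = (Finset.univ.filter (fun i => v i ≠ 0)).card • (1 : ZMod 2) := by
        rw [Finset.sum_congr rfl (fun i hi => hone _ (Finset.mem_filter.mp hi).2),
          Finset.sum_const]
      have e3 : ((k : ℕ) : ZMod 2)
          = (Finset.univ.filter (fun i => v i ≠ 0)).card • (1 : ZMod 2) := by
        rw [hcard, nsmul_eq_mul, mul_one]
      rw [e3, ← e2, e1, hsum]
    have h2k : 2 ∣ k := (ZMod.natCast_eq_zero_iff k 2).mp hcast
    have hk2 : 2 ≤ k := by omega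
    obtain ⟨i, hi⟩ := Finset.card_pos.mp (show 0 < (Finset.univ.filter (fun i => v i ≠ 0)).card by
      rw [hcard]; omega)
    obtain ⟨j, hj⟩ := Finset.card_pos.mp
      (show 0 < ((Finset.univ.filter (fun i => v i ≠ 0)).erase i).card by
        rw [Finset.card_erase_of_mem hi, hcard]; omega)
    have hji : j ≠ i := (Finset.mem_erase.mp hj).1
    have hvi : v i = 1 := hone _ ((Finset.mem_filter.mp hi).2)
    have hvj : v j = 1 := hone _ ((Finset.mem_filter.mp (Finset.mem_erase.mp hj).2).2)
    set v' : Fin n → ZMod 2 := v + Pi.single i 1 + Pi.single j 1 with hv'def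
    have hv'e : ∀ t, v' t = v t + (Pi.single i 1 : Fin n → ZMod 2) t + (Pi.single j 1 : Fin n → ZMod 2) t := fun t => rfl
    have hv'i : v' i = 0 := by
      rw [hv'e, Pi.single_eq_same, Pi.single_eq_of_ne hji.symm, hvi]
      decide
    have hv'j : v' j = 0 := by
      rw [hv'e, Pi.single_eq_same, Pi.single_eq_of_ne hji, hvj]
      decide
    have hv't : ∀ t, t ≠ i → t ≠ j → v' t = v t := by
      intro t hti htj
      rw [hv'e, Pi.single_eq_of_ne hti, Pi.single_eq_of_ne htj, add_zero, add_zero]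
    have hvdec : v = (Pi.single i 1 + Pi.single j 1) + v' := by
      funext t
      have habc : ∀ a x y : ZMod 2, a = (x + y) + (a + x + y) := by decide
      exact habc (v t) ((Pi.single i 1 : Fin n → ZMod 2) t) ((Pi.single j 1 : Fin n → ZMod 2) t)
    have hsum' : ∑ t, v' t = 0 := by
      calc ∑ t, v' t
            = ∑ t, (v t + (Pi.single i 1 : Fin n → ZMod 2) t + (Pi.single j 1 : Fin n → ZMod 2) t) :=
            Finset.sum_congr rfl (fun t _ => hv'e t)
        _ = (∑ t, v t + ∑ t, (Pi.single i 1 : Fin n → ZMod 2) t) + ∑ t, (Pi.single j 1 : Fin n → ZMod 2) t := by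
            rw [Finset.sum_add_distrib, Finset.sum_add_distrib]
        _ = 0 := by
            rw [hsum, Finset.sum_pi_single', Finset.sum_pi_single']
            simp only [Finset.mem_univ, if_true]
            decide
    have hfil : Finset.univ.filter (fun t => v' t ≠ 0)
        = ((Finset.univ.filter (fun t => v t ≠ 0)).erase i).erase j := by
      ext t
      simp only [Finset.mem_filter, Finset.mem_erase, Finset.mem_univ, true_and]
      rcases eq_or_ne t i with rfl | hti
      · simp [hv'i]
      · rcases eq_or_ne t j with rfl | htj
        · simp [hv'j]
        · rw [hv't t hti htj]
          simp [hti, htj]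
    have hcard' : (Finset.univ.filter (fun t => v' t ≠ 0)).card = k - 2 := by
      rw [hfil, Finset.card_erase_of_mem hj, Finset.card_erase_of_mem hi, hcard]
      omega
    have hm' : Evec r n v' ∈ ACP.Arn r n h2 := Evec_mem r n h2 hr v' hsum'
    have hms : Evec r n (Pi.single i 1 + Pi.single j 1) ∈ ACP.Arn r n h2 :=
      Evec_mem r n h2 hr _ (sum_single_pair n i j hji.symm)
    have hsplit : (⟨Evec r n v, hm⟩ : ↥(ACP.Arn r n h2))
        = ⟨Evec r n (Pi.single i 1 + Pi.single j 1), hms⟩ * ⟨Evec r n v', hm'⟩ := by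
      apply Subtype.ext
      show Evec r n v = Evec r n (Pi.single i 1 + Pi.single j 1) * Evec r n v'
      conv_lhs => rw [hvdec]
      rw [Evec_add r n hr]
    rw [hsplit]
    exact mul_mem (pair_mem r n h2 hr hn i j hji.symm hms)
      (IH (k-2) (by omega) v' hcard' hsum' hm')

end Closure2


section Ker
variable (r n : ℕ) (h2 : 2 ∣ r)

lemma phi_eq_one (hr : r % 4 = 2) (x : Multiplicative (ZMod r))
    (h : (((toAdd x).val : ℕ) : ZMod (r/2)) = 0) : phi r hr x = 1 := by
  have h0 : ((ACP.oslash r (toAdd x).val : ℕ) : ZMod (r/2)) = 0 :=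
    two_mul_cancel hr (by rw [two_mul_oslash hr, h, mul_zero])
  show ofAdd (((ACP.oslash r (toAdd x).val : ℕ)) : ZMod (r/2)) = 1
  rw [h0, ofAdd_zero]

lemma Pfull_Evec (hr : r % 4 = 2) (v : Fin n → ZMod 2) :
    Pfull r n hr (Evec r n v) = 1 := by
  haveI : NeZero r := ⟨by omega⟩
  unfold Evec Pfull
  refine (map_inl _ _ _ _).trans ?_
  have hPL : PL r n hr (fun i => ofAdd (((r/2 * (v i).val : ℕ)) : ZMod r)) = 1 := by
    funext i
    show phi r hr _ = 1
    apply phi_eq_one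
    rw [toAdd_ofAdd, ZMod.val_natCast, natCast_mod_of_dvd (half_dvd hr), Nat.cast_mul,
      ZMod.natCast_self, zero_mul]
  rw [hPL, map_one]

lemma Pfull_inl_delta_pow (hr : r % 4 = 2) :
    Pfull r n hr (inl (delta r n ^ (r/2))) = 1 := by
  haveI : NeZero r := ⟨by omega⟩
  unfold Pfull
  refine (map_inl _ _ _ _).trans ?_
  rw [delta_pow]
  have hPL : PL r n hr (fun j : Fin n => if (j : ℕ) = 0 then ofAdd (((r/2 : ℕ) : ZMod r)) else 1)
      = 1 := by
    funext i
    show phi r hr (if (i : ℕ) = 0 then ofAdd (((r/2 : ℕ)) : ZMod r) else 1) = 1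
    split_ifs
    · apply phi_eq_one
      rw [toAdd_ofAdd, ZMod.val_natCast, natCast_mod_of_dvd (half_dvd hr), ZMod.natCast_self]
    · exact map_one _
  rw [hPL, map_one]

lemma eq_Evec_of_ker (hr : r % 4 = 2) (x : ACP.G r n) (h1 : Pfull r n hr x = 1) :
    ∃ v : Fin n → ZMod 2, x = Evec r n v := by
  haveI : NeZero r := ⟨by omega⟩
  haveI : NeZero (r/2) := ⟨by omega⟩
  have hR : x.right = 1 := by
    have h := congrArg SemidirectProduct.right h1
    exact h
  have hL : ∀ i, phi r hr (x.left i) = 1 := by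
    have h := congrArg SemidirectProduct.left h1
    intro i
    have h' := congrFun h i
    exact h'
  refine ⟨fun i => (((toAdd (x.left i)).val / (r/2) : ℕ) : ZMod 2), ?_⟩
  refine SemidirectProduct.ext ?_ ?_
  · funext i
    set a : ℕ := (toAdd (x.left i)).val with ha
    have hcast0 : ((a : ℕ) : ZMod (r/2)) = 0 := by
      have h3 := hL i
      unfold phi at h3
      simp only [MonoidHom.coe_mk, OneHom.coe_mk] at h3
      have h4 : ((ACP.oslash r a : ℕ) : ZMod (r/2)) = 0 := by
        have := congrArg toAdd h3
        simpa using this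
      rw [← two_mul_oslash hr a, h4, mul_zero]
    have hdvd : r/2 ∣ a := (ZMod.natCast_eq_zero_iff a (r/2)).mp hcast0
    obtain ⟨c, hc⟩ := hdvd
    have halt : a < r := ZMod.val_lt _
    have hcle : c ≤ 1 := by
      by_contra hcc
      have : r/2 * 2 ≤ a := by
        calc r/2 * 2 ≤ r/2 * c := Nat.mul_le_mul_left _ (by omega)
          _ = a := hc.symm
      omega
    have hdiv : a / (r/2) = c := by
      rw [hc]
      exact Nat.mul_div_cancel_left c (by omega)
    show x.left i = ofAdd ((r/2 * (((a / (r/2) : ℕ) : ZMod 2)).val : ℕ) : ZMod r)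
    rw [hdiv, ZMod.val_natCast, show c % 2 = c by omega, show r/2 * c = a from hc.symm, ha]
    rw [ZMod.natCast_rightInverse (toAdd (x.left i)), ofAdd_toAdd]
  · rw [hR]
    rfl

lemma sum_zero_of_Evec_mem (hr : r % 4 = 2) (v : Fin n → ZMod 2)
    (hm : Evec r n v ∈ ACP.Arn r n h2) : ∑ i, v i = 0 := by
  rw [ACP.Arn, MonoidHom.mem_ker] at hm
  unfold Evec at hm
  rw [sgn_inl, csum_Evec r n h2 hr] at hm
  have hinj : ∀ a : ZMod 2, ACP.zmod2ToUnits (ofAdd a) = 1 → a = 0 := by decide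
  exact hinj _ hm

lemma exists_preimage (hr : r % 4 = 2) (hn : 2 ≤ n) (y : ACP.G (r/2) n) :
    ∃ x : ACP.G r n, x ∈ ACP.Arn r n h2 ∧ Pfull r n hr x = y := by
  haveI : NeZero r := ⟨by omega⟩
  haveI : NeZero (r/2) := ⟨by omega⟩
  set z : Fin n → Multiplicative (ZMod r) :=
    fun i => ofAdd ((2 * (toAdd (y.left i)).val : ℕ) : ZMod r) with hz
  have hPz : PL r n hr z = y.left := by
    funext i
    show phi r hr (z i) = y.left i
    show ofAdd ((ACP.oslash r (toAdd (z i)).val : ℕ) : ZMod (r/2)) = y.left i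
    have hzi : toAdd (z i) = ((2 * (toAdd (y.left i)).val : ℕ) : ZMod r) := rfl
    rw [hzi, ZMod.val_natCast,
      Nat.mod_eq_of_lt (show 2 * (toAdd (y.left i)).val < r by
        have := ZMod.val_lt (toAdd (y.left i)); omega)]
    unfold ACP.oslash
    rw [if_pos (Nat.mul_mod_right 2 _), Nat.mul_div_cancel_left _ (by omega : 0 < 2),
      Nat.mod_eq_of_lt (ZMod.val_lt _), ZMod.natCast_rightInverse (toAdd (y.left i)),
      ofAdd_toAdd]
  have hPmk : Pfull r n hr ⟨z, y.right⟩ = y := by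
    refine SemidirectProduct.ext ?_ rfl
    exact hPz
  have hcz : ACP.csumHom r n h2 z = 1 := by
    unfold ACP.csumHom
    simp only [MonoidHom.coe_mk, OneHom.coe_mk]
    have hterm : ∀ i, (ZMod.castHom h2 (ZMod 2)) (toAdd (z i)) = 0 := by
      intro i
      have hzi : toAdd (z i) = ((2 * (toAdd (y.left i)).val : ℕ) : ZMod r) := rfl
      rw [hzi, map_natCast, Nat.cast_mul, ZMod.natCast_self, zero_mul]
    rw [Finset.sum_congr rfl (fun i _ => hterm i), Finset.sum_const, smul_zero]
    rfl
  have hsgn : ACP.sgn r n h2 ⟨z, y.right⟩ = Equiv.Perm.sign y.right := by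
    rw [mk_eq_inl_mul_inr, map_mul, sgn_inl, sgn_inr, hcz, map_one, one_mul]
  rcases Int.units_eq_one_or (Equiv.Perm.sign y.right) with hs | hs
  · refine ⟨⟨z, y.right⟩, ?_, hPmk⟩
    rw [ACP.Arn, MonoidHom.mem_ker, hsgn, hs]
  · refine ⟨inl (delta r n ^ (r/2)) * ⟨z, y.right⟩, ?_, ?_⟩
    · rw [ACP.Arn, MonoidHom.mem_ker, map_mul, hsgn, hs, sgn_inl,
        csum_delta_pow r n h2 hr hn, zmod2ToUnits_one']
      decide
    · rw [map_mul, Pfull_inl_delta_pow r n hr, one_mul, hPmk]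

end Ker

end ACPAux

/-- the kernel of `p : A_{r,n} → G_{r/2,n}` is the normal closure of `a₁²`
in `A_{r,n}`; consequently `G_{r/2,n} ≅ A_{r,n} / ⟪a₁²⟫`. -/
theorem ker_pmap_eq_normalClosure (r n : ℕ) (hn : 2 ≤ n) (hr : r % 4 = 2) :
    ({x : ↥(ACP.Arn r n (ACP.two_dvd_of_mod_four r hr)) | ACP.pmap r n (x : ACP.G r n) = 1} =
      (Subgroup.normalClosure {ACP.a1sq r n (ACP.two_dvd_of_mod_four r hr)} :
        Set ↥(ACP.Arn r n (ACP.two_dvd_of_mod_four r hr)))) ∧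
    Nonempty (ACP.G (r / 2) n ≃*
      ↥(ACP.Arn r n (ACP.two_dvd_of_mod_four r hr)) ⧸ Subgroup.normalClosure {ACP.a1sq r n (ACP.two_dvd_of_mod_four r hr)}) := by
  set h2 := ACP.two_dvd_of_mod_four r hr with hh2
  let P : ↥(ACP.Arn r n h2) →* ACP.G (r/2) n :=
    (ACPAux.Pfull r n hr).comp (ACP.Arn r n h2).subtype
  have hker : P.ker = Subgroup.normalClosure {ACP.a1sq r n h2} := by
    apply le_antisymm
    · intro x hx
      rw [MonoidHom.mem_ker] at hx
      have hx' : ACPAux.Pfull r n hr (x : ACP.G r n) = 1 := hx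
      obtain ⟨v, hv⟩ := ACPAux.eq_Evec_of_ker r n hr (x : ACP.G r n) hx'
      have hm : ACPAux.Evec r n v ∈ ACP.Arn r n h2 := hv ▸ x.2
      have hsum := ACPAux.sum_zero_of_Evec_mem r n h2 hr v hm
      have hxv : x = ⟨ACPAux.Evec r n v, hm⟩ := Subtype.ext hv
      rw [hxv]
      exact ACPAux.evec_mem_closure r n h2 hr hn _ v rfl hsum hm
    · apply Subgroup.normalClosure_le_normal
      intro g hg
      rw [Set.mem_singleton_iff] at hg
      subst hg
      rw [SetLike.mem_coe, MonoidHom.mem_ker]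
      show ACPAux.Pfull r n hr (ACP.a1sq r n h2 : ACP.G r n) = 1
      rw [ACPAux.a1sq_val r n h2 hr hn, ACPAux.Pfull_Evec r n hr]
  have hsurj : Function.Surjective P := by
    intro y
    obtain ⟨x, hxm, hx⟩ := ACPAux.exists_preimage r n h2 hr hn y
    exact ⟨⟨x, hxm⟩, hx⟩
  constructor
  · ext x
    simp only [Set.mem_setOf_eq]
    rw [← ACPAux.Pfull_eq_pmap hr, SetLike.mem_coe, ← hker, MonoidHom.mem_ker]
    exact Iff.rfl
  · exact ⟨(QuotientGroup.quotientKerEquivOfSurjective P hsurj).symm.trans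
      (QuotientGroup.quotientMulEquivOfEq hker)⟩
end
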